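/- Set r = (r₀, r₁, r₂) with r₁ = α, r₂ = (1-2α)(w-α)/(w(1-α)), r₀ = α(1-2α+αw)/(w(1-α)) and r' = (r₀', r₁', r₂') with r₁' = 1-α, r₂' = 0, r₀' = α, for 0 < α < 1/2 < 1 and w > α. Then r₀+r₁+r₂ = 1 and r₀'+r₁'+r₂' = 1, and the mean-field currents with v = 1 match on both sides of the shock for species 1: r₁(r₀ + r₂) = r₁'(r₀' + r₂') (both equal α(1-α)). Moreover r₀ = r₀' if and only if w = 1. -/

import Mathlib

/-- The densities on the two sides of the shock in the
permeable/semipermeable two-species TASEP with `v = 1`, `α = β < 1/2`: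
both triples sum to `1`, the mean-field species-1 currents match across the
shock (both equal to `α(1-α)`), and the hole densities match iff `w = 1`. -/
theorem shock_densities (α w : ℝ) (hα0 : 0 < α) (hα : α < 1/2) (hw : α < w) :
    let r₁ : ℝ := α
    let r₂ : ℝ := (1 - 2*α) * (w - α) / (w * (1 - α))
    let r₀ : ℝ := α * (1 - 2*α + α*w) / (w * (1 - α))
    let r₁' : ℝ := 1 - α
    let r₂' : ℝ := (0 : ℝ)
    let r₀' : ℝ := α
    r₀ + r₁ + r₂ = 1 ∧ r₀' + r₁' + r₂' = 1 ∧
    r₁ * (r₀ + r₂) = r₁' * (r₀' + r₂') ∧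
    r₁ * (r₀ + r₂) = α * (1 - α) ∧
    (r₀ = r₀' ↔ w = 1) := by
  intro r₁ r₂ r₀ r₁' r₂' r₀'
  have hw0 : w ≠ 0 := by linarith
  have h1α : (1 : ℝ) - α ≠ 0 := by linarith
  have hd : w * (1 - α) ≠ 0 := mul_ne_zero hw0 h1α
  refine ⟨?_, by ring, ?_, ?_, ?_⟩
  · simp only [r₀, r₁, r₂]; field_simp; ring
  · simp only [r₀, r₁, r₂, r₀', r₁', r₂']; field_simp; ring
  · simp only [r₀, r₁, r₂]; field_simp; ring
  · simp only [r₀, r₀']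
    constructor
    · intro h
      rw [div_eq_iff hd] at h
      have h2 : (1 - 2*α) * (w - 1) = 0 := by nlinarith [h]
      rcases mul_eq_zero.mp h2 with h3 | h3
      · linarith
      · linarith
    · intro h; subst h; field_simp; ring
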